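/- If f ∈ K[X] is irreducible of prime degree p over a field K, and L is a finite extension of K such that f becomes reducible over L, then p divides [L : K]. -/

import Mathlib

open Polynomial

/-- Nagell's Lemma: if `f ∈ K[X]` is irreducible of prime degree `p` over `K`, and `L`
is a finite extension of `K` over which `f` becomes reducible, then `p ∣ [L : K]`. -/
theorem nagell_lemma (K L : Type*) [Field K] [Field L] [Algebra K L]
    [FiniteDimensional K L] (f : K[X]) (p : ℕ) (hp : p.Prime)
    (hdeg : f.natDegree = p) (hirr : Irreducible f)
    (hred : ¬ Irreducible (f.map (algebraMap K L))) :
    p ∣ Module.finrank K L := by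
  set fL := f.map (algebraMap K L) with hfL
  have hf0 : f ≠ 0 := hirr.ne_zero
  have hfL0 : fL ≠ 0 := Polynomial.map_ne_zero hf0
  have hfLdeg : fL.natDegree = p := by
    rw [hfL, natDegree_map, hdeg]
  have hfLnu : ¬ IsUnit fL :=
    Polynomial.not_isUnit_of_natDegree_pos fL (by rw [hfLdeg]; exact hp.pos)
  obtain ⟨g, hg, hgdvd⟩ := WfDvdMonoid.exists_irreducible_factor hfLnu hfL0
  have hgpos : 0 < g.natDegree :=
    natDegree_pos_iff_degree_pos.mpr (degree_pos_of_irreducible hg)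
  have hgle : g.natDegree ≤ p := hfLdeg ▸ natDegree_le_of_dvd hgdvd hfL0
  have hgne : g.natDegree ≠ p := by
    intro h
    exact hred ((associated_of_dvd_of_natDegree_le hgdvd hfL0
      (by rw [h, hfLdeg])).irreducible hg)
  have hglt : g.natDegree < p := lt_of_le_of_ne hgle hgne
  have : Fact (Irreducible g) := ⟨hg⟩
  letI M := AdjoinRoot g
  haveI : FiniteDimensional L M := PowerBasis.finite (AdjoinRoot.powerBasis hg.ne_zero)
  haveI : FiniteDimensional K M := FiniteDimensional.trans K L M
  have hLM : Module.finrank L M = g.natDegree := by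
    rw [(AdjoinRoot.powerBasis hg.ne_zero).finrank, AdjoinRoot.powerBasis_dim]
  set α : M := AdjoinRoot.root g with hα
  have hroot : aeval α f = 0 := by
    rw [aeval_def, IsScalarTower.algebraMap_eq K L M, ← eval₂_map]
    exact eval₂_eq_zero_of_dvd_of_eval₂_eq_zero _ _ hgdvd (AdjoinRoot.eval₂_root g)
  have hint : IsIntegral K α := IsIntegral.of_finite K α
  have hmin : (minpoly K α).natDegree = p := by
    have hdvd : minpoly K α ∣ f := minpoly.dvd K α hroot
    obtain ⟨c, hc⟩ := hdvd
    rcases hirr.isUnit_or_isUnit hc with h | h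
    · exact absurd h (minpoly.not_isUnit K α)
    · rw [hc, natDegree_mul (minpoly.ne_zero hint) (fun h0 => by simp [h0] at hc; exact hf0 hc),
        Polynomial.natDegree_eq_zero_of_isUnit h, add_zero] at hdeg
      exact hdeg
  have hdvdKM : p ∣ Module.finrank K M := by
    rw [← Module.finrank_mul_finrank K (IntermediateField.adjoin K {α} : IntermediateField K M) M]
    have he : Module.finrank K (IntermediateField.adjoin K {α} : IntermediateField K M) = p :=
      (IntermediateField.adjoin.finrank hint).trans hmin
    exact he ▸ dvd_mul_right _ _
  rw [← Module.finrank_mul_finrank K L M, hLM] at hdvdKM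
  exact (Nat.Coprime.dvd_of_dvd_mul_right
    (Nat.coprime_of_lt_prime hgpos.ne' hglt hp) hdvdKM)
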